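/- Let 𝕊 : Matrix 𝒮 ℛ ℝ with 𝒮, ℛ finite. For a subset ℛ' ⊆ ℛ and i ∈ 𝒮, call i a food species of ℛ' if the restricted row (𝕊 i r)_{r ∈ ℛ'} is nonzero and all its entries are ≤ 0, and a waste species of ℛ' if that restricted row is nonzero and all its entries are ≥ 0. Let ℛ_A, ℛ_B ⊆ ℛ with core sets C_A, C_B ⊆ 𝒮 and food sets F_A, F_B. Assume: every i ∈ 𝒮 whose restricted row over ℛ_A is nonzero is a food species, a waste species, or an element of C_A (empty non-core member set), and similarly for B; and F_A ≠ F_B. Define region_A = {𝕊.mulVec v | v : ℛ → ℝ, v r > 0 for r ∈ ℛ_A, v r = 0 for r ∉ ℛ_A, and (𝕊.mulVec v) c > 0 for all c ∈ C_A}, and region_B analogously. Then region_A ∩ region_B = ∅. -/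
import Mathlib


open Matrix

private lemma food_neg {𝒮 ℛ : Type*} [Fintype 𝒮] [Fintype ℛ]
    (𝕊 : Matrix 𝒮 ℛ ℝ) (R : Set ℛ) (v : ℛ → ℝ)
    (h1 : ∀ r ∈ R, 0 < v r) (h2 : ∀ r ∉ R, v r = 0) (i : 𝒮)
    (hnz : ∃ r ∈ R, 𝕊 i r ≠ 0) (hle : ∀ r ∈ R, 𝕊 i r ≤ 0) :
    𝕊.mulVec v i < 0 := by
  obtain ⟨r₀, hr₀, hnz⟩ := hnz
  have : ∑ r, 𝕊 i r * v r < ∑ r : ℛ, (0 : ℝ) := by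
    refine Finset.sum_lt_sum (fun r _ => ?_) ⟨r₀, Finset.mem_univ _, ?_⟩
    · by_cases hr : r ∈ R
      · exact mul_nonpos_of_nonpos_of_nonneg (hle r hr) (h1 r hr).le
      · simp [h2 r hr]
    · exact mul_neg_of_neg_of_pos (lt_of_le_of_ne (hle r₀ hr₀) hnz) (h1 r₀ hr₀)
  simpa [Matrix.mulVec, dotProduct] using this

private lemma aux_contra {𝒮 ℛ : Type*} [Fintype 𝒮] [Fintype ℛ]
    (𝕊 : Matrix 𝒮 ℛ ℝ) (RA RB : Set ℛ) (CB FB : Set 𝒮)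
    (hFB : ∀ i : 𝒮, i ∈ FB ↔
      ((∃ r ∈ RB, 𝕊 i r ≠ 0) ∧ ∀ r ∈ RB, 𝕊 i r ≤ 0))
    (hmemB : ∀ i : 𝒮, (∃ r ∈ RB, 𝕊 i r ≠ 0) →
      (∀ r ∈ RB, 𝕊 i r ≤ 0) ∨ (∀ r ∈ RB, 0 ≤ 𝕊 i r) ∨ i ∈ CB)
    (vA vB : ℛ → ℝ)
    (hA1 : ∀ r ∈ RA, 0 < vA r) (hA2 : ∀ r ∉ RA, vA r = 0)
    (hB1 : ∀ r ∈ RB, 0 < vB r) (hB2 : ∀ r ∉ RB, vB r = 0)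
    (hB3 : ∀ c ∈ CB, 0 < 𝕊.mulVec vB c)
    (i : 𝒮) (hnz : ∃ r ∈ RA, 𝕊 i r ≠ 0) (hle : ∀ r ∈ RA, 𝕊 i r ≤ 0)
    (hiFB : i ∉ FB) (heq : 𝕊.mulVec vA = 𝕊.mulVec vB) : False := by
  have hneg : 𝕊.mulVec vB i < 0 := heq ▸ food_neg 𝕊 RA vA hA1 hA2 i hnz hle
  by_cases hBz : ∃ r ∈ RB, 𝕊 i r ≠ 0
  · rcases hmemB i hBz with h | h | h
    · exact hiFB ((hFB i).mpr ⟨hBz, h⟩)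
    · have : 0 ≤ 𝕊.mulVec vB i := by
        apply Finset.sum_nonneg
        intro r _
        by_cases hr : r ∈ RB
        · exact mul_nonneg (h r hr) (hB1 r hr).le
        · simp [hB2 r hr]
      linarith
    · linarith [hB3 i h]
  · push_neg at hBz
    have : 𝕊.mulVec vB i = 0 := by
      apply Finset.sum_eq_zero
      intro r _
      by_cases hr : r ∈ RB
      · simp [hBz r hr]
      · simp [hB2 r hr]
    linarith

/-- Theorem: two autocatalytic subnetworks (with reaction sets `RA`, `RB`,
core sets `CA`, `CB`, and food sets `FA`, `FB`) whose non-core member sets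
are empty and whose food sets differ have disjoint species-productive
regions. -/
theorem distinct_food_sets_disjoint_productive_regions {𝒮 ℛ : Type*}
    [Fintype 𝒮] [Fintype ℛ]
    (𝕊 : Matrix 𝒮 ℛ ℝ)
    (RA RB : Set ℛ) (CA CB FA FB : Set 𝒮)
    -- `FA` is the food set of the subnetwork `RA`:
    (hFA : ∀ i : 𝒮, i ∈ FA ↔
      ((∃ r ∈ RA, 𝕊 i r ≠ 0) ∧ ∀ r ∈ RA, 𝕊 i r ≤ 0))
    -- `FB` is the food set of the subnetwork `RB`:
    (hFB : ∀ i : 𝒮, i ∈ FB ↔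
      ((∃ r ∈ RB, 𝕊 i r ≠ 0) ∧ ∀ r ∈ RB, 𝕊 i r ≤ 0))
    -- empty non-core member set for `A`: every species with nonzero
    -- restricted row is a food species, a waste species, or a core species:
    (hmemA : ∀ i : 𝒮, (∃ r ∈ RA, 𝕊 i r ≠ 0) →
      (∀ r ∈ RA, 𝕊 i r ≤ 0) ∨ (∀ r ∈ RA, 0 ≤ 𝕊 i r) ∨ i ∈ CA)
    (hmemB : ∀ i : 𝒮, (∃ r ∈ RB, 𝕊 i r ≠ 0) →
      (∀ r ∈ RB, 𝕊 i r ≤ 0) ∨ (∀ r ∈ RB, 0 ≤ 𝕊 i r) ∨ i ∈ CB)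
    (hFne : FA ≠ FB) :
    {w : 𝒮 → ℝ | ∃ v : ℛ → ℝ, (∀ r ∈ RA, 0 < v r) ∧ (∀ r ∉ RA, v r = 0) ∧
        (∀ c ∈ CA, 0 < 𝕊.mulVec v c) ∧ w = 𝕊.mulVec v} ∩
      {w : 𝒮 → ℝ | ∃ v : ℛ → ℝ, (∀ r ∈ RB, 0 < v r) ∧ (∀ r ∉ RB, v r = 0) ∧
        (∀ c ∈ CB, 0 < 𝕊.mulVec v c) ∧ w = 𝕊.mulVec v} = ∅ := by
  ext w
  simp only [Set.mem_inter_iff, Set.mem_setOf_eq, Set.mem_empty_iff_false, iff_false]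
  rintro ⟨⟨vA, hA1, hA2, hA3, rfl⟩, ⟨vB, hB1, hB2, hB3, heq⟩⟩
  have hne : ∃ i, (i ∈ FA ∧ i ∉ FB) ∨ (i ∈ FB ∧ i ∉ FA) := by
    by_contra h
    push_neg at h
    exact hFne (Set.ext fun i => ⟨fun hi => (h i).1 hi,
      fun hi => (h i).2 hi⟩)
  obtain ⟨i, ⟨hiA, hiB⟩ | ⟨hiB, hiA⟩⟩ := hne
  · obtain ⟨hnz, hle⟩ := (hFA i).mp hiA
    exact aux_contra 𝕊 RA RB CB FB hFB hmemB vA vB hA1 hA2 hB1 hB2 hB3 i hnz hle hiB heq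
  · obtain ⟨hnz, hle⟩ := (hFB i).mp hiB
    exact aux_contra 𝕊 RB RA CA FA hFA hmemA vB vA hB1 hB2 hA1 hA2 hA3 i hnz hle hiA heq.symm
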